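/- For every fixed n ≥ 0, the function S_n(λ) = sup_{m ≥ 0} ∑_{k=m}^{m+n} λ^k e^{-λ}/k! is strictly decreasing in λ on (0, +∞); that is, for all 0 < λ₁ < λ₂ one has sup_{m ≥ 0} ∑_{k=m}^{m+n} λ₁^k e^{-λ₁}/k! > sup_{m ≥ 0} ∑_{k=m}^{m+n} λ₂^k e^{-λ₂}/k!. (This supremum equals the sum of the n+1 largest terms of the Poisson probability sequence {p_k(λ) : k ≥ 0} rearranged in non-increasing order.) -/

import Mathlib

open Finset Real Filter

namespace PoissonBlockAux

noncomputable def p (l : ℝ) (k : ℕ) : ℝ := l ^ k * Real.exp (-l) / (Nat.factorial k : ℝ)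

noncomputable def s (n : ℕ) (l : ℝ) (m : ℕ) : ℝ := ∑ k ∈ Finset.Icc m (m + n), p l k

noncomputable def S (n : ℕ) (l : ℝ) : ℝ := ⨆ m : ℕ, s n l m

lemma p_nonneg {l : ℝ} (hl : 0 ≤ l) (k : ℕ) : 0 ≤ p l k := by
  unfold p; positivity

lemma p_pos {l : ℝ} (hl : 0 < l) (k : ℕ) : 0 < p l k := by
  unfold p
  have h : (0:ℝ) < (Nat.factorial k : ℝ) := by
    exact_mod_cast Nat.factorial_pos k
  positivity

lemma s_le_one {l : ℝ} (hl : 0 ≤ l) (n m : ℕ) : s n l m ≤ 1 := by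
  have h1 : s n l m = (∑ k ∈ Icc m (m+n), l ^ k / (Nat.factorial k : ℝ)) * Real.exp (-l) := by
    unfold s p; rw [Finset.sum_mul]; exact Finset.sum_congr rfl fun k _ => by ring
  rw [h1]
  have h2 : (∑ k ∈ Icc m (m+n), l ^ k / (Nat.factorial k : ℝ)) ≤ Real.exp l := by
    calc (∑ k ∈ Icc m (m+n), l ^ k / (Nat.factorial k : ℝ))
        ≤ ∑ k ∈ range (m+n+1), l ^ k / (Nat.factorial k : ℝ) := by
          apply Finset.sum_le_sum_of_subset_of_nonneg
          · intro k hk; simp only [mem_Icc] at hk; simp only [mem_range]; omega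
          · intro k _ _; positivity
      _ ≤ Real.exp l := Real.sum_le_exp_of_nonneg hl _
  calc (∑ k ∈ Icc m (m+n), l ^ k / (Nat.factorial k : ℝ)) * Real.exp (-l)
      ≤ Real.exp l * Real.exp (-l) := mul_le_mul_of_nonneg_right h2 (Real.exp_nonneg _)
    _ = 1 := by rw [← Real.exp_add]; simp

lemma bdd {l : ℝ} (hl : 0 ≤ l) (n : ℕ) : BddAbove (Set.range (s n l)) := by
  refine ⟨1, ?_⟩; rintro x ⟨m, rfl⟩; exact s_le_one hl n m

lemma window_le_S {l : ℝ} (hl : 0 < l) (n : ℕ) {a b : ℕ} (hab : b ≤ a + n) :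
    ∑ k ∈ Icc a b, p l k ≤ S n l := by
  have h : ∑ k ∈ Icc a b, p l k ≤ s n l a := by
    apply Finset.sum_le_sum_of_subset_of_nonneg (Finset.Icc_subset_Icc_right hab)
    intro k _ _; exact p_nonneg hl.le k
  exact h.trans (le_ciSup (bdd hl.le n) a)

lemma S_pos {l : ℝ} (hl : 0 < l) (n : ℕ) : 0 < S n l := by
  have h0 : (0:ℕ) ∈ Icc 0 (0+n) := by simp
  have h : p l 0 ≤ s n l 0 := Finset.single_le_sum (fun k _ => p_nonneg hl.le k) h0
  exact lt_of_lt_of_le (p_pos hl 0) (h.trans (le_ciSup (bdd hl.le n) 0))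

lemma p_add (l₁ μ : ℝ) (k : ℕ) :
    p (l₁ + μ) k = ∑ j ∈ range (k + 1), p μ j * p l₁ (k - j) := by
  unfold p
  rw [show l₁ + μ = μ + l₁ by ring, add_pow, Finset.sum_mul, Finset.sum_div]
  refine Finset.sum_congr rfl fun j hj => ?_
  have hj' : j ≤ k := by simp only [mem_range] at hj; omega
  have hfac : ((k.choose j : ℝ)) * (Nat.factorial j : ℝ) * (Nat.factorial (k-j) : ℝ)
      = (Nat.factorial k : ℝ) := by
    exact_mod_cast Nat.choose_mul_factorial_mul_factorial hj'
  have h1 : (Nat.factorial j : ℝ) ≠ 0 := by positivity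
  have h2 : (Nat.factorial (k-j) : ℝ) ≠ 0 := by positivity
  have h3 : (Nat.factorial k : ℝ) ≠ 0 := by positivity
  rw [neg_add, Real.exp_add]
  field_simp
  linear_combination (μ ^ j * l₁ ^ (k - j)) * hfac

lemma s_le {n m : ℕ} {l₁ μ : ℝ} (h₁ : 0 < l₁) (hμ : 0 < μ) :
    s n (l₁ + μ) m ≤ S n l₁ * ∑ j ∈ range (m + n + 1), p μ j := by
  have expand : s n (l₁ + μ) m
      = ∑ j ∈ range (m + n + 1), ∑ k ∈ Icc (max m j) (m + n), p μ j * p l₁ (k - j) := by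
    unfold s
    rw [Finset.sum_congr rfl fun k _ => p_add l₁ μ k]
    refine Finset.sum_comm' ?_
    intro k j
    simp only [mem_Icc, mem_range]
    omega
  rw [expand]
  have hS := S_pos h₁ n
  calc ∑ j ∈ range (m+n+1), ∑ k ∈ Icc (max m j) (m+n), p μ j * p l₁ (k - j)
      ≤ ∑ j ∈ range (m+n+1), p μ j * S n l₁ := by
        apply Finset.sum_le_sum
        intro j hj
        rw [← Finset.mul_sum]
        refine mul_le_mul_of_nonneg_left ?_ (p_nonneg hμ.le j)
        have hjle : j ≤ m + n := by simp only [mem_range] at hj; omega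
        have hicc : Finset.Icc (max m j) (m+n)
            = Finset.map (addLeftEmbedding j) (Icc (max m j - j) (m+n-j)) := by
          rw [Finset.map_add_left_Icc]
          congr 1 <;> omega
        have hreindex : ∑ k ∈ Icc (max m j) (m+n), p l₁ (k - j)
            = ∑ i ∈ Icc (max m j - j) (m + n - j), p l₁ i := by
          rw [hicc, Finset.sum_map]
          refine Finset.sum_congr rfl fun i _ => ?_
          congr 1
          simp only [addLeftEmbedding_apply]
          omega
        rw [hreindex]
        exact window_le_S h₁ n (by omega)
    _ = (∑ j ∈ range (m+n+1), p μ j) * S n l₁ := by rw [← Finset.sum_mul]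
    _ = S n l₁ * ∑ j ∈ range (m+n+1), p μ j := by ring

lemma partial_lt_one {μ : ℝ} (hμ : 0 < μ) (N : ℕ) : ∑ j ∈ range N, p μ j < 1 := by
  have h1 : ∑ j ∈ range N, p μ j
      = (∑ j ∈ range N, μ ^ j / (Nat.factorial j : ℝ)) * Real.exp (-μ) := by
    rw [Finset.sum_mul]; exact Finset.sum_congr rfl fun j _ => by unfold p; ring
  rw [h1]
  have h2 : ∑ j ∈ range N, μ ^ j / (Nat.factorial j : ℝ) < Real.exp μ := by
    have hNpos : (0:ℝ) < μ ^ N / (Nat.factorial N : ℝ) := by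
      have h : (0:ℝ) < (Nat.factorial N : ℝ) := by exact_mod_cast Nat.factorial_pos N
      positivity
    calc ∑ j ∈ range N, μ ^ j / (Nat.factorial j : ℝ)
        < ∑ j ∈ range (N+1), μ ^ j / (Nat.factorial j : ℝ) := by
          rw [Finset.sum_range_succ]
          linarith
      _ ≤ Real.exp μ := Real.sum_le_exp_of_nonneg hμ.le _
  calc (∑ j ∈ range N, μ ^ j / (Nat.factorial j : ℝ)) * Real.exp (-μ)
      < Real.exp μ * Real.exp (-μ) := mul_lt_mul_of_pos_right h2 (Real.exp_pos _)
    _ = 1 := by rw [← Real.exp_add]; simp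

end PoissonBlockAux

open PoissonBlockAux in
/-- For every fixed `n ≥ 0`, the function
`S_n(λ) = sup_{m ≥ 0} ∑_{k=m}^{m+n} λ^k e^{-λ}/k!` (the sum of the `n+1` largest Poisson
probabilities) is strictly decreasing in `λ` on `(0, ∞)`. -/
theorem poisson_top_block_sum_strictAntiOn (n : ℕ) :
    StrictAntiOn (fun l : ℝ =>
      ⨆ m : ℕ, ∑ k ∈ Finset.Icc m (m + n), l ^ k * Real.exp (-l) / (Nat.factorial k : ℝ))
      (Set.Ioi (0 : ℝ)) := by
  intro l₁ hl₁ l₂ hl₂ h12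
  simp only [Set.mem_Ioi] at hl₁ hl₂
  show S n l₂ < S n l₁
  set μ := l₂ - l₁ with hμdef
  have hμ : 0 < μ := by simp only [hμdef]; linarith
  have hl₂' : l₂ = l₁ + μ := by simp only [hμdef]; ring
  have hS1 := S_pos hl₁ n
  have hm : ∀ m, s n l₂ m < S n l₁ := by
    intro m
    calc s n l₂ m ≤ S n l₁ * ∑ j ∈ range (m+n+1), p μ j := by
          rw [hl₂']; exact s_le hl₁ hμ
      _ < S n l₁ * 1 := by
          exact mul_lt_mul_of_pos_left (partial_lt_one hμ _) hS1
      _ = S n l₁ := mul_one _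
  have hl₂pos : 0 < l₂ := hl₁.trans h12
  obtain ⟨M, hM⟩ : ∃ M : ℕ,
      (∑' i : ℕ, l₂ ^ (i + M) / (Nat.factorial (i + M) : ℝ)) < S n l₁ := by
    have ht := tendsto_sum_nat_add (fun k => l₂ ^ k / (Nat.factorial k : ℝ))
    exact (ht.eventually_lt_const hS1).exists
  have htail : ∀ m, M ≤ m →
      s n l₂ m ≤ ∑' i : ℕ, l₂ ^ (i + M) / (Nat.factorial (i + M) : ℝ) := by
    intro m hMm
    have hsum : Summable (fun i : ℕ => l₂ ^ (i + M) / (Nat.factorial (i + M) : ℝ)) :=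
      (summable_nat_add_iff M).2 (Real.summable_pow_div_factorial l₂)
    have step1 : s n l₂ m ≤ ∑ k ∈ Icc m (m+n), l₂ ^ k / (Nat.factorial k : ℝ) := by
      unfold s p
      apply Finset.sum_le_sum
      intro k _
      have hexp : Real.exp (-l₂) ≤ 1 := Real.exp_le_one_iff.2 (by linarith)
      have hfk : (0:ℝ) < (Nat.factorial k : ℝ) := by exact_mod_cast Nat.factorial_pos k
      rw [div_le_div_iff₀ hfk hfk]
      have : l₂ ^ k * Real.exp (-l₂) ≤ l₂ ^ k * 1 :=
        mul_le_mul_of_nonneg_left hexp (by positivity)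
      nlinarith
    have hicc : Finset.Icc m (m+n)
        = Finset.map (addLeftEmbedding M) (Icc (m - M) (m + n - M)) := by
      rw [Finset.map_add_left_Icc]
      congr 1 <;> omega
    have step2 : ∑ k ∈ Icc m (m+n), l₂ ^ k / (Nat.factorial k : ℝ)
        = ∑ i ∈ Icc (m - M) (m + n - M), l₂ ^ (i + M) / (Nat.factorial (i + M) : ℝ) := by
      rw [hicc, Finset.sum_map]
      refine Finset.sum_congr rfl fun i _ => ?_
      simp only [addLeftEmbedding_apply]
      rw [add_comm M i]
    have step3 : ∑ i ∈ Icc (m - M) (m + n - M), l₂ ^ (i + M) / (Nat.factorial (i + M) : ℝ)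
        ≤ ∑' i : ℕ, l₂ ^ (i + M) / (Nat.factorial (i + M) : ℝ) := by
      apply Summable.sum_le_tsum
      · intro i _
        positivity
      · exact hsum
    linarith [step1, step2.le, step3]
  have hne : (Finset.range (M+1)).Nonempty := ⟨0, by simp⟩
  set T := ∑' i : ℕ, l₂ ^ (i + M) / (Nat.factorial (i + M) : ℝ) with hT
  set c := max ((Finset.range (M+1)).sup' hne (s n l₂)) T with hc
  have hub : ∀ m, s n l₂ m ≤ c := by
    intro m
    rcases le_or_gt m M with h | h
    · exact le_max_of_le_left (Finset.le_sup' _ (by simp only [mem_range]; omega))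
    · exact le_max_of_le_right (htail m h.le)
  have hcS : c < S n l₁ := by
    apply max_lt _ hM
    rw [Finset.sup'_lt_iff]
    intro m _
    exact hm m
  exact lt_of_le_of_lt (ciSup_le hub) hcS
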